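/- arXiv:2505.06539 — 4 statements merged into one kernel-verified Lean document; each statement's English description precedes it below -/
import Mathlib

section
/- If P(z) is a complex polynomial of degree n having all its zeros in the closed unit disk |z| ≤ 1, then n·max_{|z|=1}|P(z)| ≤ 2·max_{|z|=1}|P'(z)|. -/
open Polynomial Metric Complex Real

private lemma half_le_re (z r : ℂ) (hz : ‖z‖ = 1) (hr : ‖r‖ ≤ 1) (hne : z - r ≠ 0) :
    (1:ℝ)/2 ≤ (z * (z - r)⁻¹).re := by
  have hz2 : z.re^2 + z.im^2 = 1 := by
    have : Complex.normSq z = 1 := by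
      rw [← Complex.sq_norm, hz]; norm_num
    simpa [Complex.normSq_apply, sq] using this
  have hr2 : r.re^2 + r.im^2 ≤ 1 := by
    have : Complex.normSq r ≤ 1 := by
      rw [← Complex.sq_norm]; nlinarith [norm_nonneg r]
    simpa [Complex.normSq_apply, sq] using this
  have hN : 0 < (z.re - r.re)^2 + (z.im - r.im)^2 := by
    rcases sub_ne_zero.mp (sub_ne_zero.mpr (sub_ne_zero.mp hne) ) with _
    have h0 : Complex.normSq (z - r) ≠ 0 := fun h => hne (Complex.normSq_eq_zero.mp h)
    have h1 : 0 ≤ Complex.normSq (z - r) := Complex.normSq_nonneg _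
    have := lt_of_le_of_ne h1 (Ne.symm h0)
    simpa [Complex.normSq_apply, Complex.sub_re, Complex.sub_im, sq] using this
  rw [← div_eq_mul_inv, Complex.div_re]
  simp only [Complex.normSq_apply, Complex.sub_re, Complex.sub_im]
  rw [← add_div, le_div_iff₀ (by nlinarith)]
  nlinarith

private lemma pointwise (P : Polynomial ℂ) (n : ℕ) (hdeg : P.natDegree = n)
    (hroots : ∀ z : ℂ, P.eval z = 0 → ‖z‖ ≤ 1) (z : ℂ) (hz : ‖z‖ = 1) :
    (n : ℝ) * ‖P.eval z‖ ≤ 2 * ‖P.derivative.eval z‖ := by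
  classical
  by_cases hPz : P.eval z = 0
  · rw [hPz]
    simp

  set s := P.roots with hs
  set c := P.leadingCoeff with hc
  have hsplit : P.Splits := IsAlgClosed.splits P
  have hcard : Multiset.card s = n := by
    rw [hs, (Polynomial.splits_iff_card_roots).mp hsplit, hdeg]
  have hfac : P = C c * (s.map fun a => X - C a).prod :=
    hsplit.eq_prod_roots
  have hne : ∀ r ∈ s, z - r ≠ 0 := by
    intro r hr h
    have : P.eval r = 0 := (Polynomial.isRoot_of_mem_roots hr)
    rw [← sub_eq_zero.mp h] at this
    exact hPz this
  have hrle : ∀ r ∈ s, ‖r‖ ≤ 1 := fun r hr => hroots r (Polynomial.isRoot_of_mem_roots hr)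
  -- eval of P
  have hevalP : P.eval z = c * (s.map fun a => z - a).prod := by
    conv_lhs => rw [hfac]
    simp [eval_multiset_prod, Multiset.map_map, Function.comp]
  -- derivative
  have hDP : P.derivative = C c * (s.map fun r => ((s.erase r).map fun a => X - C a).prod).sum := by
    conv_lhs => rw [hfac]
    rw [derivative_mul, derivative_C, zero_mul, zero_add, derivative_prod]
    simp [derivative_X_sub_C]
  have hevalD : P.derivative.eval z
      = c * (s.map fun r => ((s.erase r).map fun a => z - a).prod).sum := by
    rw [hDP, eval_mul, eval_C]
    congr 1
    have h1 := map_multiset_sum (Polynomial.evalRingHom z)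
      (s.map fun r => ((s.erase r).map fun a => X - C a).prod)
    simp only [coe_evalRingHom] at h1
    rw [h1, Multiset.map_map]
    congr 1
    apply Multiset.map_congr rfl
    intro r hr
    simp [eval_multiset_prod, Multiset.map_map, Function.comp]
  set T : ℂ := (s.map fun r => z * (z - r)⁻¹).sum with hT
  have hkey : z * P.derivative.eval z = P.eval z * T := by
    rw [hevalD, hevalP, hT, mul_left_comm, mul_assoc c]
    congr 1
    rw [← Multiset.sum_map_mul_left, ← Multiset.sum_map_mul_left]
    congr 1
    apply Multiset.map_congr rfl
    intro r hr
    have hsplitprod : (s.map fun a => z - a).prod = (z - r) * ((s.erase r).map fun a => z - a).prod := by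
      conv_lhs => rw [← Multiset.cons_erase hr]
      rw [Multiset.map_cons, Multiset.prod_cons]
    have hnr := hne r hr
    field_simp
    linear_combination (-z) * hsplitprod
  have hTre : (n : ℝ) / 2 ≤ T.re := by
    have : T.re = ((s.map fun r => z * (z - r)⁻¹).map Complex.re).sum := by
      rw [hT]
      exact (map_multiset_sum Complex.reAddGroupHom _)
    rw [this, Multiset.map_map]
    have hb : ∀ x ∈ s.map (Complex.re ∘ fun r => z * (z - r)⁻¹), (1:ℝ)/2 ≤ x := by
      intro x hx
      rcases Multiset.mem_map.mp hx with ⟨r, hr, rfl⟩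
      exact half_le_re z r hz (hrle r hr) (hne r hr)
    have := Multiset.card_nsmul_le_sum hb
    rw [Multiset.card_map, hcard] at this
    calc (n:ℝ)/2 = n • ((1:ℝ)/2) := by simp [nsmul_eq_mul]; ring
    _ ≤ _ := this
  have hTnorm : (n : ℝ) / 2 ≤ ‖T‖ := hTre.trans (Complex.re_le_norm T)
  have hnorm : ‖P.eval z‖ * ‖T‖ = ‖P.derivative.eval z‖ := by
    rw [← norm_mul, ← hkey, norm_mul, hz, one_mul]
  nlinarith [norm_nonneg (P.eval z), norm_nonneg T, norm_nonneg (P.derivative.eval z),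
    mul_le_mul_of_nonneg_left hTnorm (norm_nonneg (P.eval z))]

theorem stmt0 (P : Polynomial ℂ) (n : ℕ) (hn : 1 ≤ n) (hdeg : P.natDegree = n)
    (hroots : ∀ z : ℂ, P.eval z = 0 → ‖z‖ ≤ 1)
    : (n : ℝ) * (⨆ z : sphere (0:ℂ) 1, ‖P.eval ↑z‖) ≤ 2 * (⨆ z : sphere (0:ℂ) 1, ‖P.derivative.eval ↑z‖) := by
  haveI : Nonempty (sphere (0:ℂ) 1) := ⟨⟨1, by simp⟩⟩
  have hbdd : BddAbove (Set.range fun z : sphere (0:ℂ) 1 => ‖P.derivative.eval ↑z‖) := by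
    have hc : IsCompact (sphere (0:ℂ) 1) := isCompact_sphere 0 1
    have himg := hc.bddAbove_image (f := fun z : ℂ => ‖P.derivative.eval z‖)
      (Continuous.continuousOn (by continuity))
    rw [show (fun z : sphere (0:ℂ) 1 => ‖P.derivative.eval ↑z‖)
        = (fun z : ℂ => ‖P.derivative.eval z‖) ∘ Subtype.val from rfl, Set.range_comp,
      Subtype.range_coe]
    exact himg
  rw [Real.mul_iSup_of_nonneg (by positivity)]
  apply ciSup_le
  intro z
  have hz : ‖(z : ℂ)‖ = 1 := by
    have := z.2
    rwa [mem_sphere_zero_iff_norm] at this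
  calc (n : ℝ) * ‖P.eval ↑z‖ ≤ 2 * ‖P.derivative.eval ↑z‖ := pointwise P n hdeg hroots z hz
  _ ≤ 2 * (⨆ z : sphere (0:ℂ) 1, ‖P.derivative.eval ↑z‖) := by
      have := le_ciSup hbdd z
      linarith
end

section
/- If P(z) is a complex polynomial of degree n with all its zeros in the disk |z| ≤ k, where k ≤ 1, then n·max_{|z|=1}|P(z)| ≤ (1+k)·max_{|z|=1}|P'(z)|. -/
open Polynomial Metric Complex Real

lemma key_re {z r : ℂ} {k : ℝ} (hz : ‖z‖ = 1) (hr : ‖r‖ ≤ k) (hk1 : k ≤ 1)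
    (hne : z ≠ r) : (1 + k)⁻¹ ≤ (z * (z - r)⁻¹).re := by
  have hk0 : 0 ≤ k := le_trans (norm_nonneg r) hr
  have hd : z - r ≠ 0 := sub_ne_zero.mpr hne
  have hN : 0 < Complex.normSq (z - r) := Complex.normSq_pos.mpr hd
  have hz2 : z.re ^ 2 + z.im ^ 2 = 1 := by
    have h2 : Complex.normSq z = 1 := by
      rw [Complex.normSq_eq_norm_sq, hz]; norm_num
    simpa [Complex.normSq_apply, sq] using h2
  have hr2 : r.re ^ 2 + r.im ^ 2 ≤ k ^ 2 := by
    have := Complex.normSq_eq_norm_sq r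
    nlinarith [norm_nonneg r, Complex.normSq_apply r]
  rw [mul_comm, ← div_eq_inv_mul, Complex.div_re]
  have hNS : Complex.normSq (z - r) = (z.re - r.re) ^ 2 + (z.im - r.im) ^ 2 := by
    simp [Complex.normSq_apply, sq]
  have ht : -k ≤ z.re * r.re + z.im * r.im := by
    have habs := Complex.abs_re_le_norm (z * (starRingEnd ℂ) r)
    rw [norm_mul, Complex.norm_conj, hz, one_mul] at habs
    have hmre : (z * (starRingEnd ℂ) r).re = z.re * r.re + z.im * r.im := by
      simp [Complex.mul_re]
    rw [hmre] at habs
    have := abs_le.mp (le_trans habs hr)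
    linarith [this.1]
  rw [inv_eq_one_div, ← add_div, div_le_div_iff₀ (by linarith) hN, hNS]
  simp only [Complex.sub_re, Complex.sub_im]
  nlinarith [mul_nonneg (by linarith : (0:ℝ) ≤ 1 - k)
    (by linarith : (0:ℝ) ≤ z.re * r.re + z.im * r.im + k), hr2, hz2]

lemma logderiv_aux (z : ℂ) : ∀ m : Multiset ℂ, (∀ r ∈ m, z ≠ r) →
    Polynomial.eval z (Polynomial.derivative (m.map (fun r => X - C r)).prod)
      = Polynomial.eval z (m.map (fun r => X - C r)).prod
        * (m.map (fun r => (z - r)⁻¹)).sum := by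
  intro m
  induction m using Multiset.induction with
  | empty => simp
  | cons a s ih =>
    intro h
    have ha : z - a ≠ 0 := sub_ne_zero.mpr (h a (Multiset.mem_cons_self a s))
    simp only [Multiset.map_cons, Multiset.prod_cons, Multiset.sum_cons, derivative_mul,
      derivative_sub, derivative_X, derivative_C, sub_zero, eval_add, eval_mul, eval_sub,
      eval_X, eval_C, eval_one, one_mul]
    rw [ih (fun r hr => h r (Multiset.mem_cons_of_mem hr))]
    field_simp

theorem stmt1 (P : Polynomial ℂ) (n : ℕ) (hn : 1 ≤ n) (hdeg : P.natDegree = n)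
    (k : ℝ) (hk0 : 0 < k) (hk1 : k ≤ 1)
    (hroots : ∀ z : ℂ, P.eval z = 0 → ‖z‖ ≤ k)
    : (n : ℝ) * (⨆ z : sphere (0:ℂ) 1, ‖P.eval ↑z‖) ≤ (1 + k) * (⨆ z : sphere (0:ℂ) 1, ‖P.derivative.eval ↑z‖) := by
  have hP0 : P ≠ 0 := by
    intro h
    rw [h, natDegree_zero] at hdeg
    omega
  have hksum : (0:ℝ) < 1 + k := by linarith
  have hone : (1:ℂ) ∈ sphere (0:ℂ) 1 := by simp
  have hne : Nonempty (sphere (0:ℂ) 1) := ⟨⟨1, hone⟩⟩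
  have hcP : Continuous fun z : ℂ => ‖P.eval z‖ := (P.continuous).norm
  have hcP' : Continuous fun z : ℂ => ‖P.derivative.eval z‖ := (P.derivative.continuous).norm
  obtain ⟨z₀, hz₀mem, hz₀max⟩ := (isCompact_sphere (0:ℂ) 1).exists_isMaxOn ⟨1, hone⟩
    hcP.continuousOn
  have hz₀ : ‖z₀‖ = 1 := by simpa using hz₀mem
  -- bdd above facts
  have hbddP : BddAbove (Set.range fun z : sphere (0:ℂ) 1 => ‖P.eval ↑z‖) := by
    have h := ((isCompact_sphere (0:ℂ) 1).image hcP).bddAbove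
    rwa [← Subtype.range_coe (s := sphere (0:ℂ) 1), ← Set.range_comp] at h
  have hbddP' : BddAbove (Set.range fun z : sphere (0:ℂ) 1 => ‖P.derivative.eval ↑z‖) := by
    have h := ((isCompact_sphere (0:ℂ) 1).image hcP').bddAbove
    rwa [← Subtype.range_coe (s := sphere (0:ℂ) 1), ← Set.range_comp] at h
  have hsupP : (⨆ z : sphere (0:ℂ) 1, ‖P.eval ↑z‖) = ‖P.eval z₀‖ :=
    le_antisymm (ciSup_le fun z => hz₀max z.2) (le_ciSup hbddP ⟨z₀, hz₀mem⟩)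
  have hsupP' : ‖P.derivative.eval z₀‖ ≤ ⨆ z : sphere (0:ℂ) 1, ‖P.derivative.eval ↑z‖ :=
    le_ciSup hbddP' ⟨z₀, hz₀mem⟩
  -- P(z₀) ≠ 0
  have hPz₀ : P.eval z₀ ≠ 0 := by
    intro h0
    have hzero : ∀ z ∈ sphere (0:ℂ) 1, P.eval z = 0 := by
      intro z hz
      have h := hz₀max hz
      simp only [Set.mem_setOf_eq] at h
      rw [h0, norm_zero] at h
      exact norm_le_zero_iff.mp h
    have hfin : {x : ℂ | P.IsRoot x}.Finite := Polynomial.finite_setOf_isRoot hP0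
    have hinf : (sphere (0:ℂ) 1).Infinite := by
      apply IsPreconnected.infinite_of_nontrivial
      · exact isPreconnected_sphere (by rw [Complex.rank_real_complex]; norm_num) 0 1
      · exact ⟨1, hone, -1, by simp, by norm_num⟩
    exact hinf (hfin.subset hzero)
  -- factorization
  have hs : P.Splits := IsAlgClosed.splits P
  have hcard : P.roots.card = n := by rw [← hdeg]; exact Polynomial.splits_iff_card_roots.mp hs
  have hfac : P = C P.leadingCoeff * (P.roots.map fun a => X - C a).prod :=
    hs.eq_prod_roots
  have hrootmem : ∀ r ∈ P.roots, ‖r‖ ≤ k ∧ z₀ ≠ r := by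
    intro r hr
    have hroot : P.eval r = 0 := (Polynomial.mem_roots hP0).mp hr
    refine ⟨hroots r hroot, ?_⟩
    intro h
    exact hPz₀ (h ▸ hroot)
  set S1 : ℂ := (P.roots.map (fun r => (z₀ - r)⁻¹)).sum with hS1
  set S : ℂ := (P.roots.map (fun r => z₀ * (z₀ - r)⁻¹)).sum with hS
  have hSeq : S = z₀ * S1 := by
    rw [hS, hS1, Multiset.sum_map_mul_left]
  -- log derivative identity
  have hPd : P.derivative.eval z₀ = P.eval z₀ * S1 := by
    conv_lhs => rw [hfac]
    rw [derivative_C_mul, eval_mul, eval_C,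
      logderiv_aux z₀ P.roots (fun r hr => (hrootmem r hr).2)]
    conv_rhs => rw [hfac]
    rw [eval_mul, eval_C]
    ring
  -- real part bound
  have hre : (n : ℝ) * (1 + k)⁻¹ ≤ S.re := by
    have hmap : S.re = (P.roots.map (fun r => (z₀ * (z₀ - r)⁻¹).re)).sum := by
      rw [hS, ← Complex.coe_reAddGroupHom, AddMonoidHom.map_multiset_sum, Multiset.map_map]
      rfl
    rw [hmap, ← hcard]
    have := Multiset.card_nsmul_le_sum
      (s := P.roots.map (fun r => (z₀ * (z₀ - r)⁻¹).re)) (a := (1 + k)⁻¹) ?_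
    · simpa [Multiset.card_map, nsmul_eq_mul] using this
    · intro x hx
      obtain ⟨r, hr, rfl⟩ := Multiset.mem_map.mp hx
      exact key_re hz₀ (hrootmem r hr).1 hk1 (hrootmem r hr).2
  have hSn : (n : ℝ) ≤ ‖S‖ * (1 + k) := by
    have h2 : S.re ≤ ‖S‖ := Complex.re_le_norm S
    rw [← div_le_iff₀ hksum]
    calc (n:ℝ) / (1 + k) = (n:ℝ) * (1 + k)⁻¹ := div_eq_mul_inv _ _
    _ ≤ S.re := hre
    _ ≤ ‖S‖ := h2
  have hnorm : ‖P.derivative.eval z₀‖ = ‖P.eval z₀‖ * ‖S‖ := by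
    rw [hPd, norm_mul]
    congr 1
    rw [hSeq, norm_mul, hz₀, one_mul]
  have hmain : (n : ℝ) * ‖P.eval z₀‖ ≤ (1 + k) * ‖P.derivative.eval z₀‖ := by
    rw [hnorm]
    nlinarith [norm_nonneg (P.eval z₀), norm_nonneg S]
  rw [hsupP]
  calc (n : ℝ) * ‖P.eval z₀‖ ≤ (1 + k) * ‖P.derivative.eval z₀‖ := hmain
  _ ≤ (1 + k) * ⨆ z : sphere (0:ℂ) 1, ‖P.derivative.eval ↑z‖ :=
      mul_le_mul_of_nonneg_left hsupP' (le_of_lt hksum)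
end

section
/- If P(z) = a_n z^n + Σ_{j=μ}^{n} a_{n-j} z^{n-j} (1 ≤ μ ≤ n) has degree n and all its zeros in |z| ≤ k, k ≤ 1, then for every complex α with |α| ≥ k^μ, n·(|α| − k^μ)·max_{|z|=1}|P(z)| ≤ (1+k^μ)·max_{|z|=1}|D_α P(z)|. -/
open Polynomial Metric Complex Real Filter

-- derivative of ∏ (1 - C r * X), evaluated
lemma eval_deriv_one_sub (s : Multiset ℂ) (ζ : ℂ) (h : ∀ r ∈ s, (1:ℂ) - r*ζ ≠ 0) :
    eval ζ (derivative (s.map fun r => 1 - C r * X).prod) =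
      (s.map fun r => (1:ℂ) - r*ζ).prod * (s.map fun r => -r / (1 - r*ζ)).sum := by
  induction s using Multiset.induction_on with
  | empty => simp
  | cons a s ih =>
      have ha : (1:ℂ) - a*ζ ≠ 0 := h a (Multiset.mem_cons_self ..)
      have hs : ∀ r ∈ s, (1:ℂ) - r*ζ ≠ 0 := fun r hr => h r (Multiset.mem_cons_of_mem hr)
      simp only [Multiset.map_cons, Multiset.prod_cons, Multiset.sum_cons, derivative_mul,
        eval_add, eval_mul, ih hs, derivative_sub, derivative_one, derivative_C_mul, derivative_X,
        mul_one, eval_neg, eval_C, eval_sub, eval_one, eval_mul, eval_X, zero_sub,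
        eval_multiset_prod, Multiset.map_map, Function.comp, derivative_C, eval_zero]
      field_simp
      have ha' : (1:ℂ) - ζ*a ≠ 0 := by rwa [mul_comm]
      field_simp
      ring

lemma eval_deriv_X_sub (s : Multiset ℂ) (z : ℂ) (h : ∀ r ∈ s, z - r ≠ 0) :
    eval z (derivative (s.map fun r => X - C r).prod) =
      (s.map fun r => z - r).prod * (s.map fun r => (z - r)⁻¹).sum := by
  induction s using Multiset.induction_on with
  | empty => simp
  | cons a s ih =>
      have ha : z - a ≠ 0 := h a (Multiset.mem_cons_self ..)
      have hs : ∀ r ∈ s, z - r ≠ 0 := fun r hr => h r (Multiset.mem_cons_of_mem hr)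
      simp only [Multiset.map_cons, Multiset.prod_cons, Multiset.sum_cons, derivative_mul,
        eval_add, eval_mul, ih hs, derivative_sub, derivative_one, derivative_C, derivative_X,
        eval_sub, eval_C, eval_X, eval_one, sub_zero, one_mul,
        eval_multiset_prod, Multiset.map_map, Function.comp]
      field_simp


lemma pXC_monic (s : Multiset ℂ) : ((s.map fun r => X - C r).prod).Monic :=
  monic_multiset_prod_of_monic s _ (fun r _ => monic_X_sub_C r)

lemma pXC_natDegree (s : Multiset ℂ) :
    ((s.map fun r => X - C r).prod).natDegree = Multiset.card s := by
  rw [natDegree_multiset_prod_of_monic]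
  · simp [Multiset.map_map, Function.comp, natDegree_X_sub_C]
  · intro p hp; obtain ⟨r, _, rfl⟩ := Multiset.mem_map.mp hp; exact monic_X_sub_C r


lemma eval_one_sub_prod (s : Multiset ℂ) (w : ℂ) :
    eval w (s.map fun r => 1 - C r * X).prod = (s.map fun r => (1:ℂ) - r*w).prod := by
  rw [eval_multiset_prod, Multiset.map_map]
  congr 1
  apply Multiset.map_congr rfl
  intro r _
  simp

lemma eval_X_sub_prod (s : Multiset ℂ) (w : ℂ) :
    eval w (s.map fun r => X - C r).prod = (s.map fun r => w - r).prod := by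
  rw [eval_multiset_prod, Multiset.map_map]
  congr 1
  apply Multiset.map_congr rfl
  intro r _
  simp

lemma bridge (s : Multiset ℂ) (z ζ : ℂ) (hzζ : z * ζ = 1) :
    (s.map fun r => (1:ℂ) - r*ζ).prod = ζ^(Multiset.card s) * (s.map fun r => z - r).prod := by
  have h1 : (s.map fun r => (1:ℂ) - r*ζ) = s.map fun r => ζ * (z - r) := by
    apply Multiset.map_congr rfl
    intro r _
    linear_combination -hzζ
  rw [h1, Multiset.prod_map_mul, Multiset.map_const', Multiset.prod_replicate]

lemma q_eq_reflect (s : Multiset ℂ) :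
    (s.map fun r => 1 - C r * X).prod
      = reflect (Multiset.card s) (s.map fun r => X - C r).prod := by
  set n := Multiset.card s with hn
  set p := (s.map fun r => X - C r).prod with hp
  apply Polynomial.funext
  intro w
  by_cases hw : w = 0
  · subst hw
    rw [eval_one_sub_prod, ← coeff_zero_eq_eval_zero, coeff_reflect]
    have h0 : revAt n 0 = n := by rw [revAt_le (Nat.zero_le n)]; simp
    rw [h0]
    have hcoeff : p.coeff n = 1 := by
      have := (pXC_monic s).leadingCoeff
      rwa [leadingCoeff, pXC_natDegree s] at this
    rw [hcoeff]
    simp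
  · letI : Invertible w⁻¹ := invertibleOfNonzero (inv_ne_zero hw)
    have key := eval₂_reflect_mul_pow (RingHom.id ℂ) (w⁻¹) n p (le_of_eq (pXC_natDegree s))
    rw [invOf_eq_inv, inv_inv] at key
    have hev : ∀ (f : ℂ[X]) (x : ℂ), eval₂ (RingHom.id ℂ) x f = eval x f := fun f x => rfl
    rw [hev, hev] at key
    have hq : eval w (s.map fun r => 1 - C r * X).prod = w ^ n * eval w⁻¹ p := by
      rw [eval_one_sub_prod, bridge s w⁻¹ w (inv_mul_cancel₀ hw), hp, eval_X_sub_prod]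
    rw [hq, ← key]
    field_simp
    rw [mul_right_comm, ← mul_pow, mul_one_div_cancel hw, one_pow, one_mul]


lemma re_inv_one_sub (u : ℂ) (h1 : ‖u‖ ≤ 1) (h2 : (1:ℂ) - u ≠ 0) :
    (1/2 : ℝ) ≤ ((1 - u)⁻¹).re := by
  rw [Complex.inv_re]
  have hns : 0 < Complex.normSq (1-u) := Complex.normSq_pos.mpr h2
  rw [le_div_iff₀ hns]
  have hu : Complex.normSq u ≤ 1 := by
    rw [Complex.normSq_eq_norm_sq]
    nlinarith [norm_nonneg u]
  simp only [Complex.normSq_apply, Complex.sub_re, Complex.sub_im, Complex.one_re,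
    Complex.one_im] at *
  nlinarith

lemma norm_natCast_sub_le (W : ℂ) (n : ℕ) (h : (n:ℝ)/2 ≤ W.re) : ‖(n:ℂ) - W‖ ≤ ‖W‖ := by
  have h2 : Complex.normSq ((n:ℂ) - W) ≤ Complex.normSq W := by
    simp only [Complex.normSq_apply, Complex.sub_re, Complex.sub_im, Complex.natCast_re,
      Complex.natCast_im]
    nlinarith [Nat.cast_nonneg (α := ℝ) n]
  rw [Complex.norm_def, Complex.norm_def]
  exact Real.sqrt_le_sqrt h2

lemma N_eval (s : Multiset ℂ) (w : ℂ) (h : ∀ r ∈ s, (1:ℂ) - r*w ≠ 0) :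
    eval w (X * derivative (s.map fun r => 1 - C r * X).prod)
      = (s.map fun r => (1:ℂ)-r*w).prod *
        ((Multiset.card s : ℂ) - (s.map fun r => ((1:ℂ)-r*w)⁻¹).sum) := by
  rw [eval_mul, eval_X, eval_deriv_one_sub s w h, mul_left_comm]
  congr 1
  have h1 : (s.map fun r => ((1:ℂ)-r*w)⁻¹)
      = (s.map fun r => 1 - w * (-r / (1 - r*w))) := by
    apply Multiset.map_congr rfl
    intro r hr
    field_simp [h r hr]
    ring
  rw [h1]
  have h2 : (s.map fun r => (1:ℂ) - w * (-r / (1 - r*w))).sum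
      = (s.map fun _ => (1:ℂ)).sum - (s.map fun r => w * (-r / (1 - r*w))).sum := by
    rw [← Multiset.sum_map_sub]
  rw [h2, Multiset.sum_map_mul_left]
  simp [Multiset.map_const', Multiset.sum_replicate]


lemma core_bound (s : Multiset ℂ) (n μ : ℕ) (hn : 1 ≤ n) (hcard : Multiset.card s = n)
    (k : ℝ) (hk0 : 0 < k) (hk1 : k ≤ 1) (hr : ∀ r ∈ s, ‖r‖ ≤ k)
    (hq : ∀ j, 1 ≤ j → j < μ → ((s.map fun r => 1 - C r * X).prod).coeff j = 0)
    (ζ : ℂ) (hζ : ‖ζ‖ = 1) :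
    ‖eval ζ (X * derivative (s.map fun r => 1 - C r * X).prod)‖
      ≤ k ^ μ * ‖eval ζ (C (n:ℂ) * (s.map fun r => 1 - C r * X).prod
          - X * derivative (s.map fun r => 1 - C r * X).prod)‖ := by
  set q : ℂ[X] := (s.map fun r => 1 - C r * X).prod with hqdef
  set N : ℂ[X] := X * derivative q with hNdef
  set D : ℂ[X] := C (n:ℂ) * q - N with hDdef
  -- divisibility
  have hdvd : X ^ μ ∣ N := by
    rw [Polynomial.X_pow_dvd_iff]
    intro d hd
    rcases Nat.eq_zero_or_pos d with hd0 | hd1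
    · subst hd0
      have h0 : N.coeff 0 = X.coeff 0 * (derivative q).coeff 0 := by
        rw [hNdef, Polynomial.mul_coeff_zero]
      simpa using h0
    · obtain ⟨j, rfl⟩ : ∃ j, d = j + 1 := ⟨d - 1, (Nat.succ_pred_eq_of_pos hd1).symm⟩
      rw [hNdef, Polynomial.coeff_X_mul, Polynomial.coeff_derivative, hq (j+1) hd1 hd]
      simp
  obtain ⟨N₁, hN₁⟩ := hdvd
  -- pointwise facts at good points
  have fact : ∀ w : ℂ, (∀ r ∈ s, ‖r * w‖ < 1) →
      (eval w D ≠ 0 ∧ ‖eval w N‖ ≤ ‖eval w D‖) := by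
    intro w hw
    have hne : ∀ r ∈ s, (1:ℂ) - r * w ≠ 0 := by
      intro r hrs hzero
      have h1 : r * w = 1 := by linear_combination -hzero
      have := hw r hrs
      rw [h1] at this
      simp at this
    set qv : ℂ := (s.map fun r => (1:ℂ) - r*w).prod with hqv
    set W : ℂ := (s.map fun r => ((1:ℂ)-r*w)⁻¹).sum with hW
    have hqv0 : qv ≠ 0 := by
      rw [hqv]
      apply Multiset.prod_ne_zero
      intro h0
      obtain ⟨r, hrs, hr0⟩ := Multiset.mem_map.mp h0
      exact hne r hrs hr0
    have hWre : (n:ℝ)/2 ≤ W.re := by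
      have hsum : W.re = ((s.map fun r => ((1:ℂ)-r*w)⁻¹).map Complex.re).sum := by
        rw [hW]
        exact map_multiset_sum Complex.reAddGroupHom _
      rw [hsum, Multiset.map_map]
      have hcard2 : Multiset.card (s.map fun r => (((1:ℂ)-r*w)⁻¹).re) = n := by
        rw [Multiset.card_map, hcard]
      have := Multiset.card_nsmul_le_sum (s := s.map fun r => (Complex.re ∘ fun r => ((1:ℂ)-r*w)⁻¹) r) (a := (1/2:ℝ)) ?_
      · rw [Multiset.card_map, hcard] at this
        calc (n:ℝ)/2 = n • (1/2:ℝ) := by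
              simp [nsmul_eq_mul]; ring
          _ ≤ _ := this
      · intro x hx
        obtain ⟨r, hrs, rfl⟩ := Multiset.mem_map.mp hx
        exact re_inv_one_sub (r*w) (le_of_lt (hw r hrs)) (hne r hrs)
    have hNw : eval w N = qv * ((n:ℂ) - W) := by
      rw [hNdef, hqdef]
      rw [N_eval s w hne, hcard]
    have hDw : eval w D = qv * W := by
      rw [hDdef]
      simp only [eval_sub, eval_mul, eval_C]
      rw [hNw]
      have : eval w q = qv := by rw [hqdef, hqv]; exact eval_one_sub_prod s w
      rw [this]
      ring
    have hW0 : W ≠ 0 := by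
      intro h0
      rw [h0] at hWre
      simp at hWre
      have : (1:ℝ) ≤ n := by exact_mod_cast hn
      linarith
    constructor
    · rw [hDw]; exact mul_ne_zero hqv0 hW0
    · rw [hNw, hDw, norm_mul, norm_mul]
      exact mul_le_mul_of_nonneg_left (norm_natCast_sub_le W n hWre) (norm_nonneg qv)
  -- maximum modulus step
  have MM : ∀ ρ : ℝ, 0 < ρ → ρ * k < 1 → ∀ w : ℂ, ‖w‖ ≤ ρ →
      ‖eval w N₁‖ ≤ 1/ρ^μ * ‖eval w D‖ := by
    intro ρ hρ0 hρk w hwρ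
    have hgood : ∀ u : ℂ, ‖u‖ ≤ ρ → ∀ r ∈ s, ‖r * u‖ < 1 := by
      intro u hu r hrs
      rw [norm_mul]
      calc ‖r‖ * ‖u‖ ≤ k * ρ := by
            apply mul_le_mul (hr r hrs) hu (norm_nonneg u) (le_of_lt hk0)
        _ < 1 := by rw [mul_comm]; exact hρk
    have hD0 : ∀ u : ℂ, ‖u‖ ≤ ρ → eval u D ≠ 0 := fun u hu => (fact u (hgood u hu)).1
    set g : ℂ → ℂ := fun u => eval u N₁ / eval u D with hg
    have hdiff : DiffContOnCl ℂ g (ball (0:ℂ) ρ) := by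
      apply DifferentiableOn.diffContOnCl
      rw [closure_ball (0:ℂ) (ne_of_gt hρ0)]
      apply DifferentiableOn.div
      · exact (Polynomial.differentiable N₁).differentiableOn
      · exact (Polynomial.differentiable D).differentiableOn
      · intro x hx
        exact hD0 x (by simpa [mem_closedBall, dist_zero_right] using hx)
    have hbound : ∀ u ∈ frontier (ball (0:ℂ) ρ), ‖g u‖ ≤ 1/ρ^μ := by
      intro u hu
      rw [frontier_ball (0:ℂ) (ne_of_gt hρ0)] at hu
      have hun : ‖u‖ = ρ := by simpa [mem_sphere_iff_norm] using hu
      have huρ : ‖u‖ ≤ ρ := le_of_eq hun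
      have hNu : ‖eval u N‖ = ρ^μ * ‖eval u N₁‖ := by
        rw [hN₁, eval_mul, eval_pow, eval_X, norm_mul, norm_pow, hun]
      have hle := (fact u (hgood u huρ)).2
      have hDpos : 0 < ‖eval u D‖ := norm_pos_iff.mpr (hD0 u huρ)
      rw [hg, norm_div, div_le_div_iff₀ hDpos (by positivity)]
      calc ‖eval u N₁‖ * ρ^μ = ‖eval u N‖ := by rw [hNu]; ring
        _ ≤ ‖eval u D‖ := hle
        _ = 1 * ‖eval u D‖ := by ring
    have hmem : w ∈ closure (ball (0:ℂ) ρ) := by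
      rw [closure_ball (0:ℂ) (ne_of_gt hρ0)]
      simpa [mem_closedBall, dist_zero_right] using hwρ
    have hgle := Complex.norm_le_of_forall_mem_frontier_norm_le isBounded_ball hdiff hbound hmem
    have hrec : eval w N₁ = g w * eval w D := by
      rw [hg]
      simp only []
      rw [div_mul_cancel₀ _ (hD0 w hwρ)]
    rw [hrec, norm_mul]
    exact mul_le_mul_of_nonneg_right hgle (norm_nonneg _)
  -- limit in ρ
  have step1 : ∀ t : ℝ, 0 < t → t < 1 →
      ‖eval ((t:ℂ)*ζ) N₁‖ ≤ k^μ * ‖eval ((t:ℂ)*ζ) D‖ := by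
    intro t ht0 ht1
    have hk1' : (1:ℝ) ≤ 1/k := by
      rw [le_div_iff₀ hk0]; simpa using hk1
    have htk : t < 1/k := lt_of_lt_of_le ht1 hk1'
    have hnorm : ‖(t:ℂ)*ζ‖ = t := by
      rw [norm_mul, hζ, Complex.norm_real, Real.norm_eq_abs, abs_of_pos ht0, mul_one]
    have hev : ∀ᶠ ρ in nhdsWithin (1/k) (Set.Iio (1/k)),
        ‖eval ((t:ℂ)*ζ) N₁‖ ≤ 1/ρ^μ * ‖eval ((t:ℂ)*ζ) D‖ := by
      filter_upwards [Ioo_mem_nhdsLT_of_mem (Set.mem_Ioc.mpr ⟨htk, le_refl _⟩)] with ρ hρ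
      obtain ⟨hρ1, hρ2⟩ := hρ
      have hρ0 : 0 < ρ := lt_trans ht0 hρ1
      apply MM ρ hρ0
      · rw [← lt_div_iff₀ hk0]; exact hρ2
      · rw [hnorm]; exact le_of_lt hρ1
    have htend : Tendsto (fun ρ : ℝ => 1/ρ^μ * ‖eval ((t:ℂ)*ζ) D‖)
        (nhdsWithin (1/k) (Set.Iio (1/k))) (nhds (k^μ * ‖eval ((t:ℂ)*ζ) D‖)) := by
      have h1 : (fun ρ : ℝ => 1/ρ^μ * ‖eval ((t:ℂ)*ζ) D‖) =
          fun ρ : ℝ => (1/ρ)^μ * ‖eval ((t:ℂ)*ζ) D‖ := by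
        funext ρ; rw [div_pow, one_pow]
      rw [h1]
      have hc : ContinuousAt (fun ρ : ℝ => (1/ρ)^μ * ‖eval ((t:ℂ)*ζ) D‖) (1/k) := by
        have hne : (1/k : ℝ) ≠ 0 := by positivity
        fun_prop (disch := assumption)
      have h2 := hc.continuousWithinAt (s := Set.Iio (1/k))
      unfold ContinuousWithinAt at h2
      simpa [one_div, inv_inv] using h2
    exact ge_of_tendsto htend hev
  -- limit in t
  have step2 : ‖eval ζ N₁‖ ≤ k^μ * ‖eval ζ D‖ := by
    have hne : (nhdsWithin (1:ℝ) (Set.Ioo (0:ℝ) 1)).NeBot :=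
      right_nhdsWithin_Ioo_neBot (by norm_num)
    have hcontf : Tendsto (fun t : ℝ => ‖eval ((t:ℂ)*ζ) N₁‖)
        (nhdsWithin 1 (Set.Ioo (0:ℝ) 1)) (nhds (‖eval ζ N₁‖)) := by
      have hc : Continuous (fun t : ℝ => ‖eval ((t:ℂ)*ζ) N₁‖) := by
        apply Continuous.norm
        exact (Polynomial.continuous N₁).comp (Complex.continuous_ofReal.mul continuous_const)
      apply Tendsto.mono_left _ nhdsWithin_le_nhds
      simpa using hc.tendsto 1
    have hcontg : Tendsto (fun t : ℝ => k^μ * ‖eval ((t:ℂ)*ζ) D‖)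
        (nhdsWithin 1 (Set.Ioo (0:ℝ) 1)) (nhds (k^μ * ‖eval ζ D‖)) := by
      have hc : Continuous (fun t : ℝ => k^μ * ‖eval ((t:ℂ)*ζ) D‖) := by
        apply Continuous.mul continuous_const
        apply Continuous.norm
        exact (Polynomial.continuous D).comp (Complex.continuous_ofReal.mul continuous_const)
      apply Tendsto.mono_left _ nhdsWithin_le_nhds
      simpa using hc.tendsto 1
    apply le_of_tendsto_of_tendsto hcontf hcontg
    filter_upwards [self_mem_nhdsWithin] with t ht
    exact step1 t ht.1 ht.2
  -- conclude
  have hNζ : ‖eval ζ N‖ = ‖eval ζ N₁‖ := by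
    rw [hN₁, eval_mul, eval_pow, eval_X, norm_mul, norm_pow, hζ, one_pow, one_mul]
  rw [hNζ]
  exact step2


lemma star_lemma (s : Multiset ℂ) (n μ : ℕ) (hn : 1 ≤ n) (hμ1 : 1 ≤ μ) (hμn : μ ≤ n)
    (hcard : Multiset.card s = n) (k : ℝ) (hk0 : 0 < k) (hk1 : k ≤ 1)
    (hr : ∀ r ∈ s, ‖r‖ ≤ k)
    (hgap : ∀ j, 1 ≤ j → j < μ → ((s.map fun r => X - C r).prod).coeff (n - j) = 0)
    (z : ℂ) (hz : ‖z‖ = 1) :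
    ‖(n:ℂ) * eval z (s.map fun r => X - C r).prod
        - z * eval z (derivative (s.map fun r => X - C r).prod)‖
      ≤ k ^ μ * ‖eval z (derivative (s.map fun r => X - C r).prod)‖ := by
  set p : ℂ[X] := (s.map fun r => X - C r).prod with hpdef
  by_cases hpz : eval z p = 0
  · -- a root on the unit circle: k = 1
    have h0 : (0:ℂ) ∈ s.map fun r => z - r := by
      rw [← Multiset.prod_eq_zero_iff]
      rw [← eval_X_sub_prod s z]
      exact hpz
    obtain ⟨r, hrs, hzr⟩ := Multiset.mem_map.mp h0
    have hrn : ‖r‖ = 1 := by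
      have : r = z := by linear_combination -hzr
      rw [this, hz]
    have hk : k = 1 := le_antisymm hk1 (by rw [← hrn]; exact hr r hrs)
    rw [hpz, hk]
    simp [norm_mul, hz]
  · have hzr : ∀ r ∈ s, z - r ≠ 0 := by
      intro r hrs h0
      apply hpz
      rw [eval_X_sub_prod s z]
      apply Multiset.prod_eq_zero
      rw [← h0]
      exact Multiset.mem_map_of_mem _ hrs
    have hz0 : z ≠ 0 := by
      intro h; rw [h] at hz; simp at hz
    set ζ : ℂ := z⁻¹ with hζdef
    have hzζ : z * ζ = 1 := mul_inv_cancel₀ hz0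
    have hζ : ‖ζ‖ = 1 := by rw [hζdef, norm_inv, hz]; norm_num
    have hne : ∀ r ∈ s, (1:ℂ) - r*ζ ≠ 0 := by
      intro r hrs h0
      apply hzr r hrs
      have hfac : z - r = z * (1 - r*ζ) := by linear_combination r * hzζ
      rw [hfac, h0, mul_zero]
    have hqc : ∀ j, 1 ≤ j → j < μ → ((s.map fun r => 1 - C r * X).prod).coeff j = 0 := by
      intro j hj1 hjμ
      rw [q_eq_reflect s, coeff_reflect, hcard,
        revAt_le (le_trans (le_of_lt hjμ) hμn)]
      exact hgap j hj1 hjμ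
    have hcore := core_bound s n μ hn hcard k hk0 hk1 hr hqc ζ hζ
    set pv : ℂ := eval z p with hpv
    set pd : ℂ := eval z (derivative p) with hpd
    set S : ℂ := (s.map fun r => (z - r)⁻¹).sum with hS
    have hqv : (s.map fun r => (1:ℂ) - r*ζ).prod = ζ^n * pv := by
      rw [bridge s z ζ hzζ, hcard, hpv, hpdef, eval_X_sub_prod]
    have hpdS : pd = pv * S := by
      rw [hpd, hpv, hpdef, eval_deriv_X_sub s z hzr, eval_X_sub_prod, hS]
    have hWz : (s.map fun r => ((1:ℂ)-r*ζ)⁻¹).sum = z * S := by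
      rw [hS, ← Multiset.sum_map_mul_left]
      congr 1
      apply Multiset.map_congr rfl
      intro r hrs
      have hfac : (1:ℂ) - r*ζ = ζ * (z - r) := by linear_combination -hzζ
      rw [hfac, mul_inv, hζdef, inv_inv]
    have hNz : eval ζ (X * derivative (s.map fun r => 1 - C r * X).prod)
        = ζ^n * ((n:ℂ) * pv - z * pd) := by
      rw [N_eval s ζ hne, hcard, hqv, hWz, hpdS]
      ring
    have hDz : eval ζ (C (n:ℂ) * (s.map fun r => 1 - C r * X).prod
          - X * derivative (s.map fun r => 1 - C r * X).prod)
        = ζ^n * (z * pd) := by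
      rw [eval_sub, eval_mul, eval_C, hNz, eval_one_sub_prod, hqv]
      ring
    rw [hNz, hDz, norm_mul, norm_mul, norm_pow, hζ, one_pow, one_mul, one_mul,
      norm_mul, hz, one_mul] at hcore
    exact hcore

theorem stmt6 (P : Polynomial ℂ) (n : ℕ) (hn : 1 ≤ n) (hdeg : P.natDegree = n)
    (k : ℝ) (hk0 : 0 < k) (hk1 : k ≤ 1)
    (hroots : ∀ z : ℂ, P.eval z = 0 → ‖z‖ ≤ k)
    (μ : ℕ) (hμ1 : 1 ≤ μ) (hμn : μ ≤ n)
    (hgap : ∀ j, 1 ≤ j → j < μ → P.coeff (n - j) = 0)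
    (α : ℂ) (hα : k ^ μ ≤ ‖α‖)
    : (n : ℝ) * (‖α‖ - k ^ μ) * (⨆ z : sphere (0:ℂ) 1, ‖P.eval ↑z‖) ≤ (1 + k ^ μ) * (⨆ z : sphere (0:ℂ) 1, ‖((n : ℂ) * P.eval ↑z + (α - ↑z) * P.derivative.eval ↑z)‖) := by
  have hP0 : P ≠ 0 := by
    intro h
    rw [h, natDegree_zero] at hdeg
    omega
  set a : ℂ := P.leadingCoeff with hadef
  have ha : a ≠ 0 := leadingCoeff_ne_zero.mpr hP0
  have hsplits : Multiset.card P.roots = P.natDegree :=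
    splits_iff_card_roots.mp (IsAlgClosed.splits P)
  set s : Multiset ℂ := P.roots with hsdef
  set p : ℂ[X] := (s.map fun r => X - C r).prod with hpdef
  have hfac : C a * p = P := C_leadingCoeff_mul_prod_multiset_X_sub_C hsplits
  have hcard : Multiset.card s = n := by rw [hsdef, hsplits, hdeg]
  have hrs : ∀ r ∈ s, ‖r‖ ≤ k := by
    intro r hr
    exact hroots r ((Polynomial.mem_roots'.mp hr).2)
  have hgap' : ∀ j, 1 ≤ j → j < μ → p.coeff (n - j) = 0 := by
    intro j h1 h2
    have := hgap j h1 h2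
    rw [← hfac, coeff_C_mul] at this
    exact (mul_eq_zero.mp this).resolve_left ha
  have hstar : ∀ z : ℂ, ‖z‖ = 1 →
      ‖(n:ℂ) * P.eval z - z * P.derivative.eval z‖ ≤ k^μ * ‖P.derivative.eval z‖ := by
    intro z hz
    have hd : P.derivative = C a * derivative p := by rw [← hfac, derivative_C_mul]
    have he : P.eval z = a * eval z p := by rw [← hfac]; simp
    have h2 : P.derivative.eval z = a * eval z (derivative p) := by rw [hd]; simp
    rw [he, h2]
    have hkey := star_lemma s n μ hn hμ1 hμn hcard k hk0 hk1 hrs hgap' z hz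
    have e1 : (n:ℂ)*(a*eval z p) - z*(a*eval z (derivative p))
        = a * ((n:ℂ)*eval z p - z*eval z (derivative p)) := by ring
    rw [e1, norm_mul, norm_mul]
    calc ‖a‖ * ‖(n:ℂ)*eval z p - z*eval z (derivative p)‖
        ≤ ‖a‖ * (k^μ * ‖eval z (derivative p)‖) :=
          mul_le_mul_of_nonneg_left hkey (norm_nonneg a)
      _ = k^μ * (‖a‖ * ‖eval z (derivative p)‖) := by ring
  -- extreme value
  have hcont1 : Continuous fun z : ℂ => ‖P.eval z‖ := (Polynomial.continuous P).norm
  obtain ⟨z₀, hz₀S, hmax⟩ := (isCompact_sphere (0:ℂ) 1).exists_isMaxOn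
    ⟨1, by simp⟩ hcont1.continuousOn
  have hz₀ : ‖z₀‖ = 1 := by simpa [mem_sphere_iff_norm] using hz₀S
  have hM : (⨆ z : sphere (0:ℂ) 1, ‖P.eval ↑z‖) ≤ ‖P.eval z₀‖ :=
    ciSup_le (fun z => hmax z.2)
  have hcont2 : Continuous fun z : ℂ => ‖(n:ℂ) * P.eval z + (α - z) * P.derivative.eval z‖ :=
    ((continuous_const.mul (Polynomial.continuous P)).add
      ((continuous_const.sub continuous_id).mul (Polynomial.continuous P.derivative))).norm
  have hbdd : BddAbove (Set.range fun z : sphere (0:ℂ) 1 =>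
      ‖(n:ℂ) * P.eval ↑z + (α - ↑z) * P.derivative.eval ↑z‖) := by
    have h := (isCompact_sphere (0:ℂ) 1).bddAbove_image hcont2.continuousOn
    rwa [Set.image_eq_range] at h
  have hM' : ‖(n:ℂ) * P.eval z₀ + (α - z₀) * P.derivative.eval z₀‖
      ≤ ⨆ z : sphere (0:ℂ) 1, ‖(n:ℂ) * P.eval ↑z + (α - ↑z) * P.derivative.eval ↑z‖ :=
    le_ciSup hbdd (⟨z₀, hz₀S⟩ : sphere (0:ℂ) 1)
  set A : ℝ := ‖P.eval z₀‖ with hA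
  set B : ℝ := ‖P.derivative.eval z₀‖ with hB
  have hstar0 := hstar z₀ hz₀
  have t1 : (n:ℝ) * A ≤ (1 + k^μ) * B := by
    have h1 : ((n:ℝ)) * A = ‖(n:ℂ) * P.eval z₀‖ := by
      rw [norm_mul, Complex.norm_natCast]
    have h2 : (n:ℂ) * P.eval z₀
        = ((n:ℂ) * P.eval z₀ - z₀ * P.derivative.eval z₀) + z₀ * P.derivative.eval z₀ := by ring
    have h3 : ‖z₀ * P.derivative.eval z₀‖ = B := by rw [norm_mul, hz₀, one_mul]
    rw [h1, h2]
    calc ‖_ + _‖ ≤ ‖(n:ℂ) * P.eval z₀ - z₀ * P.derivative.eval z₀‖ + ‖z₀ * P.derivative.eval z₀‖ :=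
          norm_add_le _ _
      _ ≤ k^μ * B + B := by rw [h3]; linarith [hstar0]
      _ = (1 + k^μ) * B := by ring
  have t2 : (‖α‖ - k^μ) * B ≤ ‖(n:ℂ) * P.eval z₀ + (α - z₀) * P.derivative.eval z₀‖ := by
    have h3 : (n:ℂ) * P.eval z₀ + (α - z₀) * P.derivative.eval z₀
        = α * P.derivative.eval z₀ - (z₀ * P.derivative.eval z₀ - (n:ℂ) * P.eval z₀) := by ring
    rw [h3]
    have h4 := norm_sub_norm_le (α * P.derivative.eval z₀)
      (z₀ * P.derivative.eval z₀ - (n:ℂ) * P.eval z₀)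
    have h5 : ‖α * P.derivative.eval z₀‖ = ‖α‖ * B := by rw [norm_mul]
    have h6 : ‖z₀ * P.derivative.eval z₀ - (n:ℂ) * P.eval z₀‖ ≤ k^μ * B := by
      rw [← norm_neg]
      have : -(z₀ * P.derivative.eval z₀ - (n:ℂ) * P.eval z₀)
          = (n:ℂ) * P.eval z₀ - z₀ * P.derivative.eval z₀ := by ring
      rw [this]
      exact hstar0
    nlinarith [h4, h5, h6]
  have hαk : 0 ≤ ‖α‖ - k^μ := by linarith
  have hkμ : (0:ℝ) < 1 + k^μ := by positivity
  have hB0 : 0 ≤ B := norm_nonneg _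
  calc (n:ℝ) * (‖α‖ - k^μ) * (⨆ z : sphere (0:ℂ) 1, ‖P.eval ↑z‖)
      ≤ (n:ℝ) * (‖α‖ - k^μ) * A :=
        mul_le_mul_of_nonneg_left hM (by positivity)
    _ = (‖α‖ - k^μ) * ((n:ℝ) * A) := by ring
    _ ≤ (‖α‖ - k^μ) * ((1 + k^μ) * B) := mul_le_mul_of_nonneg_left t1 hαk
    _ = (1 + k^μ) * ((‖α‖ - k^μ) * B) := by ring
    _ ≤ (1 + k^μ) * ‖(n:ℂ) * P.eval z₀ + (α - z₀) * P.derivative.eval z₀‖ :=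
        mul_le_mul_of_nonneg_left t2 (le_of_lt hkμ)
    _ ≤ (1 + k^μ) * (⨆ z : sphere (0:ℂ) 1, ‖(n:ℂ) * P.eval ↑z + (α - ↑z) * P.derivative.eval ↑z‖) :=
        mul_le_mul_of_nonneg_left hM' (le_of_lt hkμ)
end

section
/- Let P(z) = a_n z^n + Σ_{j=μ}^{n} a_{n-j} z^{n-j} (1 ≤ μ ≤ n) be a polynomial of degree n having all its zeros in |z| ≤ k where k ≤ 1, and let Q(z) = z^n · conj(P(1/conj(z))) and m = min_{|z|=k}|P(z)|. Then for |z| = 1, k^μ |P'(z)| ≥ |Q'(z)| + n·m/k^{n−μ}. -/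
open Polynomial Metric Complex Real


lemma re_half {z t : ℂ} (h : ‖t‖ ≤ ‖z‖) (hne : z ≠ t) : 1/2 ≤ (z / (z - t)).re := by
  have hd : z - t ≠ 0 := sub_ne_zero.2 hne
  have hS : 0 < Complex.normSq (z - t) := Complex.normSq_pos.2 hd
  have hn : Complex.normSq t ≤ Complex.normSq z := by
    have := pow_le_pow_left₀ (norm_nonneg t) h 2
    simpa [Complex.sq_norm] using this
  rw [Complex.div_re, ← add_div, le_div_iff₀ hS]
  simp only [Complex.normSq_apply, Complex.sub_re, Complex.sub_im] at *
  nlinarith [hn]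

lemma deriv_prod_eval (S : Multiset ℂ) (z : ℂ) (hz : ∀ t ∈ S, z ≠ t) :
    (derivative (S.map (fun t => X - C t)).prod).eval z
      = (S.map (fun t => X - C t)).prod.eval z * (S.map (fun t => (z - t)⁻¹)).sum := by
  induction S using Multiset.induction_on with
  | empty => simp
  | cons a s ih =>
    have ha : z - a ≠ 0 := sub_ne_zero.2 (hz a (Multiset.mem_cons_self a s))
    have ih' := ih (fun t ht => hz t (Multiset.mem_cons_of_mem ht))
    simp only [Multiset.map_cons, Multiset.prod_cons, Multiset.sum_cons, derivative_mul,
      derivative_sub, derivative_X, derivative_C, sub_zero, one_mul, eval_add, eval_mul,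
      eval_sub, eval_X, eval_C, ih']
    field_simp

lemma norm_cast_sub_le {x : ℝ} {W : ℂ} (hx : 0 ≤ x) (h : x ≤ 2 * W.re) :
    ‖(x:ℂ) - W‖ ≤ ‖W‖ := by
  rw [Complex.norm_def, Complex.norm_def]
  apply Real.sqrt_le_sqrt
  simp only [Complex.normSq_apply, Complex.sub_re, Complex.sub_im, Complex.ofReal_re,
    Complex.ofReal_im]
  nlinarith

/-- Key eval identity: if `P.eval z ≠ 0` then `z * P'(z) = P(z) * W` where
`W` is the multiset sum of `z / (z - t)` over roots. -/
lemma eval_deriv_eq (P : Polynomial ℂ) (hP : P ≠ 0) (z : ℂ) (hz : P.eval z ≠ 0) :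
    z * (derivative P).eval z
      = P.eval z * (P.roots.map (fun t => z / (z - t))).sum := by
  have hsp : Splits P := IsAlgClosed.splits P
  set S := P.roots with hS
  set a := P.leadingCoeff with ha
  have hfac : P = C a * (S.map (fun t => X - C t)).prod := hsp.eq_prod_roots
  have hne : ∀ t ∈ S, z ≠ t := by
    intro t ht h
    exact hz (h ▸ (Polynomial.isRoot_of_mem_roots ht))
  have h2 : P.eval z = a * ((S.map (fun t => X - C t)).prod).eval z := by
    conv_lhs => rw [hfac]
    rw [eval_mul, eval_C]
  have h1 : (derivative P).eval z
      = P.eval z * (S.map (fun t => (z - t)⁻¹)).sum := by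
    conv_lhs => rw [hfac]
    rw [derivative_mul, derivative_C, zero_mul, zero_add, eval_mul,
      deriv_prod_eval _ _ hne, eval_C, h2]
    ring
  rw [h1]
  rw [show (S.map (fun t => z / (z - t))).sum
      = z * (S.map (fun t => (z - t)⁻¹)).sum by
    simp only [div_eq_mul_inv, Multiset.sum_map_mul_left]]
  ring

lemma roots_card (P : Polynomial ℂ) (hP : P ≠ 0) : P.roots.card = P.natDegree := by
  have hsp : Splits P := IsAlgClosed.splits P
  have := hsp.natDegree_eq_card_roots
  simpa [Polynomial.map_id] using this.symm

lemma W_re_ge (P : Polynomial ℂ) (z : ℂ) (hroots : ∀ t ∈ P.roots, ‖t‖ ≤ ‖z‖)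
    (hz : P.eval z ≠ 0) :
    (P.natDegree : ℝ)/2 ≤ ((P.roots.map (fun t => z / (z - t))).sum).re := by
  have hP : P ≠ 0 := fun h => hz (by simp [h])
  have hcard := roots_card P hP
  have hre : ((P.roots.map (fun t => z / (z - t))).sum).re
      = ((P.roots.map (fun t => z / (z - t))).map Complex.re).sum := by
    exact map_multiset_sum Complex.reAddGroupHom _
  rw [hre, Multiset.map_map]
  have hle : ∀ x ∈ P.roots.map (Complex.re ∘ fun t => z / (z - t)), (1:ℝ)/2 ≤ x := by
    intro x hx
    obtain ⟨t, ht, rfl⟩ := Multiset.mem_map.1 hx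
    have hne : z ≠ t := fun h => hz (h ▸ Polynomial.isRoot_of_mem_roots ht)
    exact re_half (hroots t ht) hne
  have := Multiset.card_nsmul_le_sum hle
  rw [Multiset.card_map, hcard] at this
  calc (P.natDegree : ℝ)/2 = P.natDegree • ((1:ℝ)/2) := by
        simp [nsmul_eq_mul]; ring
    _ ≤ _ := this

lemma lemA (P : Polynomial ℂ) (n : ℕ) (hdeg : P.natDegree = n) (z : ℂ)
    (hroots : ∀ t ∈ P.roots, ‖t‖ ≤ ‖z‖) :
    ‖(C (n:ℂ) * P - X * derivative P).eval z‖ ≤ ‖z * (derivative P).eval z‖ := by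
  by_cases hz : P.eval z = 0
  · simp only [eval_sub, eval_mul, eval_C, eval_X, hz, mul_zero, zero_sub, norm_neg]
    exact le_refl _
  · have hP : P ≠ 0 := fun h => hz (by simp [h])
    set W : ℂ := (P.roots.map (fun t => z / (z - t))).sum with hWdef
    have hW : z * (derivative P).eval z = P.eval z * W := eval_deriv_eq P hP z hz
    have hre : (n:ℝ)/2 ≤ W.re := by
      have := W_re_ge P z hroots hz
      rwa [hdeg] at this
    have hkey : ‖(n:ℂ) - W‖ ≤ ‖W‖ := by
      have h2 : ‖((n:ℝ):ℂ) - W‖ ≤ ‖W‖ :=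
        norm_cast_sub_le (x := (n:ℝ)) (by positivity) (by linarith)
      rwa [show (((n:ℝ)):ℂ) = (n:ℂ) by push_cast; ring] at h2
    have hR : (C (n:ℂ) * P - X * derivative P).eval z = P.eval z * ((n:ℂ) - W) := by
      simp only [eval_sub, eval_mul, eval_C, eval_X]
      rw [hW]; ring
    rw [hR, hW, norm_mul, norm_mul]
    exact mul_le_mul_of_nonneg_left hkey (norm_nonneg _)

lemma deriv_ne_zero (P : Polynomial ℂ) (hP : 1 ≤ P.natDegree) (z : ℂ)
    (hroots : ∀ t ∈ P.roots, ‖t‖ < ‖z‖) :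
    P.eval z ≠ 0 ∧ (derivative P).eval z ≠ 0 := by
  have hz : P.eval z ≠ 0 := by
    intro h
    have hP0 : P ≠ 0 := fun h0 => by simp [h0] at hP
    have : z ∈ P.roots := Polynomial.mem_roots'.2 ⟨hP0, h⟩
    exact absurd (hroots z this) (lt_irrefl _)
  refine ⟨hz, fun h => ?_⟩
  have hW := eval_deriv_eq P (fun h0 => hz (by simp [h0])) z hz
  rw [h, mul_zero] at hW
  have : ((P.roots.map (fun t => z / (z - t))).sum) = 0 := by
    rcases mul_eq_zero.1 hW.symm with h1 | h1
    · exact absurd h1 hz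
    · exact h1
  have hre := W_re_ge P z (fun t ht => le_of_lt (hroots t ht)) hz
  rw [this] at hre
  simp only [Complex.zero_re] at hre
  have : (1:ℝ) ≤ P.natDegree := by exact_mod_cast hP
  linarith

lemma coeff_R (P : Polynomial ℂ) (n : ℕ) (i : ℕ) :
    (C (n:ℂ) * P - X * derivative P).coeff i = ((n:ℂ) - i) * P.coeff i := by
  rw [coeff_sub, coeff_C_mul]
  cases i with
  | zero => simp
  | succ j =>
    rw [coeff_X_mul, coeff_derivative]
    push_cast
    ring

lemma natDegree_R_le (P : Polynomial ℂ) (n μ : ℕ) (hdeg : P.natDegree = n)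
    (hμn : μ ≤ n) (hgap : ∀ j, 1 ≤ j → j < μ → P.coeff (n - j) = 0) :
    (C (n:ℂ) * P - X * derivative P).natDegree ≤ n - μ := by
  rw [natDegree_le_iff_coeff_eq_zero]
  intro i hi
  rw [coeff_R]
  rcases lt_trichotomy i n with h | h | h
  · have h1 : 1 ≤ n - i := by omega
    have h2 : n - i < μ := by omega
    have := hgap (n - i) h1 h2
    rw [show n - (n - i) = i by omega] at this
    rw [this, mul_zero]
  · subst h; simp
  · rw [coeff_eq_zero_of_natDegree_lt (by omega : P.natDegree < i), mul_zero]

lemma reflect_eval {p : Polynomial ℂ} {N : ℕ} (h : p.natDegree ≤ N) {x : ℂ} (hx : x ≠ 0) :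
    (reflect N p).eval x⁻¹ * x ^ N = p.eval x := by
  have : Invertible x := invertibleOfNonzero hx
  have h2 := eval₂_reflect_mul_pow (RingHom.id ℂ) x N p h
  rw [invOf_eq_inv] at h2
  exact h2

lemma reflect_eval_zero (p : Polynomial ℂ) (N : ℕ) : (reflect N p).eval 0 = p.coeff N := by
  rw [show eval (0:ℂ) (reflect N p) = (reflect N p).coeff 0 by
    rw [Polynomial.coeff_zero_eq_eval_zero]]
  rw [Polynomial.coeff_reflect]
  simp [Polynomial.revAt_le (Nat.zero_le N)]

lemma lemC (P : Polynomial ℂ) (n μ : ℕ) (hn : 1 ≤ n) (hdeg : P.natDegree = n)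
    (k : ℝ) (hk0 : 0 < k) (hk1 : k ≤ 1)
    (hroots : ∀ t ∈ P.roots, ‖t‖ ≤ k)
    (hμ1 : 1 ≤ μ) (hμn : μ ≤ n)
    (hgap : ∀ j, 1 ≤ j → j < μ → P.coeff (n - j) = 0)
    (z : ℂ) (hz1 : ‖z‖ = 1) :
    ‖(C (n:ℂ) * P - X * derivative P).eval z‖ ≤ k ^ μ * ‖(derivative P).eval z‖ := by
  have hP0 : P ≠ 0 := fun h => by simp [h] at hdeg; omega
  have hz0 : z ≠ 0 := fun h => by simp [h] at hz1
  set R : Polynomial ℂ := C (n:ℂ) * P - X * derivative P with hR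
  rcases eq_or_lt_of_le hk1 with hk | hk
  · -- k = 1
    subst hk
    have := lemA P n hdeg z (fun t ht => by rw [hz1]; exact hroots t ht)
    rw [norm_mul, hz1, one_mul] at this
    simpa [hR] using this
  · -- k < 1
    have hP'deg : 1 ≤ P.natDegree := hdeg ▸ hn
    have h1k : 1 < 1/k := one_lt_one_div hk0 hk
    set A : Polynomial ℂ := reflect (n - μ) R with hA
    set B : Polynomial ℂ := reflect (n - 1) (derivative P) with hB
    have hRdeg : R.natDegree ≤ n - μ := natDegree_R_le P n μ hdeg hμn hgap
    have hPddeg : (derivative P).natDegree ≤ n - 1 :=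
      le_trans (natDegree_derivative_le P) (by rw [hdeg])
    have hBne : ∀ w : ℂ, ‖w‖ < 1/k → B.eval w ≠ 0 := by
      intro w hw
      rcases eq_or_ne w 0 with rfl | hw0
      · rw [hB, reflect_eval_zero, coeff_derivative,
          show n - 1 + 1 = n from by omega]
        have : P.coeff n ≠ 0 := by
          rw [← hdeg, Polynomial.coeff_natDegree]
          exact leadingCoeff_ne_zero.2 hP0
        exact mul_ne_zero this (Nat.cast_add_one_ne_zero (n-1))
      · set x : ℂ := w⁻¹ with hxdef
        have hx0 : x ≠ 0 := inv_ne_zero hw0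
        have hxval : ‖x‖ = ‖w‖⁻¹ := norm_inv w
        have hklt : k < ‖x‖ := by
          rw [hxval]
          have hw0' : 0 < ‖w‖ := norm_pos_iff.2 hw0
          rw [lt_inv_comm₀ hk0 hw0'] -- k < ‖w‖⁻¹ ↔ ‖w‖ < 1/k ?
          · exact lt_of_lt_of_le hw (by rw [one_div])
        have hPd : (derivative P).eval x ≠ 0 :=
          (deriv_ne_zero P hP'deg x
            (fun t ht => lt_of_le_of_lt (hroots t ht) hklt)).2
        intro hBw
        have := reflect_eval (p := derivative P) hPddeg hx0
        rw [← hB, hxdef, inv_inv] at this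
        rw [hBw, zero_mul] at this
        exact hPd this.symm
    -- the quotient function
    set G : ℂ → ℂ := fun w => A.eval w / B.eval w with hG
    have hGbound : ∀ r : ℝ, 1 ≤ r → r < 1/k → ‖G z⁻¹‖ ≤ 1/r^μ := by
      intro r hr1 hrk
      have hr0 : (0:ℝ) < r := lt_of_lt_of_le one_pos hr1
      have hfr : ∀ w ∈ frontier (ball (0:ℂ) r), ‖G w‖ ≤ 1/r^μ := by
        intro w hwf
        rw [frontier_ball (0:ℂ) (ne_of_gt hr0), mem_sphere_zero_iff_norm] at hwf
        have hw0 : w ≠ 0 := by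
          intro h; rw [h, norm_zero] at hwf; exact absurd hwf.symm (ne_of_gt hr0)
        set x : ℂ := w⁻¹ with hxdef
        have hx0 : x ≠ 0 := inv_ne_zero hw0
        have hxval : ‖x‖ = 1/r := by rw [hxdef, norm_inv, hwf, one_div]
        have hklex : k ≤ ‖x‖ := by
          rw [hxval, le_div_iff₀ hr0]
          have := (lt_div_iff₀ hk0).1 hrk
          linarith
        have hAe := reflect_eval (p := R) hRdeg hx0
        rw [← hA, hxdef, inv_inv] at hAe
        have hBe := reflect_eval (p := derivative P) hPddeg hx0
        rw [← hB, hxdef, inv_inv] at hBe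
        have hlem := lemA P n hdeg x (fun t ht => le_trans (hroots t ht) hklex)
        have hklt : k < ‖x‖ := by
          rw [hxval, lt_div_iff₀ hr0]
          have := (lt_div_iff₀ hk0).1 hrk
          linarith
        have hPd : (derivative P).eval x ≠ 0 :=
          (deriv_ne_zero P hP'deg x
            (fun t ht => lt_of_le_of_lt (hroots t ht) hklt)).2
        have hBw : B.eval w ≠ 0 := hBne w (by rw [hwf]; exact hrk)
        -- norms
        have hnA : ‖A.eval w‖ * (1/r)^(n-μ) = ‖R.eval x‖ := by
          rw [← hAe, norm_mul, norm_pow, hxval]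
        have hnB : ‖B.eval w‖ * (1/r)^(n-1) = ‖(derivative P).eval x‖ := by
          rw [← hBe, norm_mul, norm_pow, hxval]
        have hRx : ‖R.eval x‖ ≤ (1/r) * ‖(derivative P).eval x‖ := by
          have := hlem
          rw [norm_mul, hxval] at this
          exact this
        have hr0' : (0:ℝ) < 1/r := by positivity
        have key : ‖A.eval w‖ * (1/r)^(n-μ) ≤ (‖B.eval w‖ * (1/r)^μ) * (1/r)^(n-μ) := by
          rw [hnA]
          calc ‖R.eval x‖ ≤ (1/r) * ‖(derivative P).eval x‖ := hRx
            _ = (1/r) * (‖B.eval w‖ * (1/r)^(n-1)) := by rw [hnB]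
            _ = (‖B.eval w‖ * (1/r)^μ) * (1/r)^(n-μ) := by
                have e1 : (1/r:ℝ) * (1/r)^(n-1) = (1/r)^n := by
                  rw [← pow_succ']
                  congr 1
                  omega
                have e2 : ((1/r):ℝ)^μ * (1/r)^(n-μ) = (1/r)^n := by
                  rw [← pow_add]
                  congr 1
                  omega
                calc (1/r:ℝ) * (‖B.eval w‖ * (1/r)^(n-1))
                    = ‖B.eval w‖ * ((1/r) * (1/r)^(n-1)) := by ring
                  _ = ‖B.eval w‖ * (1/r)^n := by rw [e1]
                  _ = ‖B.eval w‖ * ((1/r)^μ * (1/r)^(n-μ)) := by rw [e2]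
                  _ = (‖B.eval w‖ * (1/r)^μ) * (1/r)^(n-μ) := by ring
        have hAB : ‖A.eval w‖ ≤ ‖B.eval w‖ * (1/r)^μ :=
          le_of_mul_le_mul_right key (by positivity)
        rw [hG]
        simp only [norm_div]
        rw [div_le_iff₀ (norm_pos_iff.2 hBw)]
        calc ‖A.eval w‖ ≤ ‖B.eval w‖ * (1/r)^μ := hAB
          _ = 1/r^μ * ‖B.eval w‖ := by rw [one_div, inv_pow]; ring
      -- max modulus
      have hdiff : DiffContOnCl ℂ G (ball (0:ℂ) r) := by
        apply DifferentiableOn.diffContOnCl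
        rw [closure_ball (0:ℂ) (ne_of_gt hr0)]
        apply DifferentiableOn.div
        · exact (Polynomial.differentiable A).differentiableOn
        · exact (Polynomial.differentiable B).differentiableOn
        · intro w hw
          apply hBne
          rw [mem_closedBall, dist_zero_right] at hw
          exact lt_of_le_of_lt hw hrk
      have hmem : z⁻¹ ∈ closure (ball (0:ℂ) r) := by
        rw [closure_ball (0:ℂ) (ne_of_gt hr0), mem_closedBall, dist_zero_right,
          norm_inv, hz1]
        simpa using hr1
      exact Complex.norm_le_of_forall_mem_frontier_norm_le isBounded_ball hdiff hfr hmem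
    -- limit r → 1/k
    have hGfinal : ‖G z⁻¹‖ ≤ k^μ := by
      have htend : Filter.Tendsto (fun r : ℝ => 1/r^μ) (nhdsWithin (1/k) (Set.Iio (1/k)))
          (nhds (k^μ)) := by
        have hcont : ContinuousAt (fun r : ℝ => 1/r^μ) (1/k) := by
          apply ContinuousAt.div continuousAt_const (continuousAt_pow _ _)
          positivity
        have hval : (1:ℝ)/(1/k)^μ = k^μ := by
          rw [one_div k, inv_pow, one_div, inv_inv]
        have ht := hcont.continuousWithinAt (s := Set.Iio (1/k)) |>.tendsto
        rwa [hval] at ht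
      apply ge_of_tendsto htend
      filter_upwards [Ioo_mem_nhdsLT_of_mem (Set.mem_Ioc.2 ⟨h1k, le_refl _⟩)] with r hr
      exact hGbound r (le_of_lt hr.1) hr.2
    -- extract
    have hz1' : z⁻¹ ≠ 0 := inv_ne_zero hz0
    have hBz : B.eval z⁻¹ ≠ 0 := hBne z⁻¹ (by rw [norm_inv, hz1]; simpa using h1k)
    have hAe := reflect_eval (p := R) hRdeg hz0
    rw [← hA] at hAe
    have hBe := reflect_eval (p := derivative P) hPddeg hz0
    rw [← hB] at hBe
    have hnA : ‖A.eval z⁻¹‖ = ‖R.eval z‖ := by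
      rw [← hAe, norm_mul, norm_pow, hz1, one_pow, mul_one]
    have hnB : ‖B.eval z⁻¹‖ = ‖(derivative P).eval z‖ := by
      rw [← hBe, norm_mul, norm_pow, hz1, one_pow, mul_one]
    have := hGfinal
    rw [hG] at this
    simp only [norm_div] at this
    rw [div_le_iff₀ (norm_pos_iff.2 hBz)] at this
    rw [hnA, hnB] at this
    calc ‖R.eval z‖ ≤ k^μ * ‖(derivative P).eval z‖ := this
      _ = k^μ * ‖(derivative P).eval z‖ := rfl

lemma growth (P : Polynomial ℂ) (n : ℕ) (hn : 1 ≤ n) (hdeg : P.natDegree = n)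
    (k m : ℝ) (hk0 : 0 < k)
    (hstrict : ∀ t ∈ P.roots, ‖t‖ < k)
    (hmin : ∀ ζ : ℂ, ‖ζ‖ = k → m ≤ ‖P.eval ζ‖) (hm0 : 0 < m) :
    ∀ w : ℂ, ‖w‖ ≤ 1/k → m / k^n ≤ ‖(reflect n P).eval w‖ := by
  have hP0 : P ≠ 0 := fun h => by simp [h] at hdeg; omega
  have h1k0 : (0:ℝ) < 1/k := by positivity
  have hcoeffn : P.coeff n ≠ 0 := by
    rw [← hdeg, Polynomial.coeff_natDegree]
    exact leadingCoeff_ne_zero.2 hP0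
  have hne : ∀ w : ℂ, ‖w‖ ≤ 1/k → (reflect n P).eval w ≠ 0 := by
    intro w hw
    rcases eq_or_ne w 0 with rfl | hw0
    · rw [reflect_eval_zero]; exact hcoeffn
    · have hx0 : w⁻¹ ≠ 0 := inv_ne_zero hw0
      have hklex : k ≤ ‖w⁻¹‖ := by
        rw [norm_inv, le_inv_comm₀ hk0 (norm_pos_iff.2 hw0)]
        rwa [← one_div]
      have hPx : P.eval w⁻¹ ≠ 0 := by
        intro h
        have : w⁻¹ ∈ P.roots := Polynomial.mem_roots'.2 ⟨hP0, h⟩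
        exact absurd (hstrict _ this) (not_lt.2 hklex)
      intro h
      have := reflect_eval (le_of_eq hdeg) hx0
      rw [inv_inv, h, zero_mul] at this
      exact hPx this.symm
  have hfr : ∀ w ∈ frontier (ball (0:ℂ) (1/k)), ‖((reflect n P).eval w)⁻¹‖ ≤ k^n/m := by
    intro w hwf
    rw [frontier_ball (0:ℂ) (ne_of_gt h1k0), mem_sphere_zero_iff_norm] at hwf
    have hw0 : w ≠ 0 := by
      intro h; rw [h, norm_zero] at hwf; exact absurd hwf.symm (ne_of_gt h1k0)
    have hx0 : w⁻¹ ≠ 0 := inv_ne_zero hw0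
    have hxn : ‖w⁻¹‖ = k := by
      rw [norm_inv, hwf, one_div, inv_inv]
    have hev := reflect_eval (le_of_eq hdeg) hx0
    rw [inv_inv] at hev
    have hnorm : ‖(reflect n P).eval w‖ * k^n = ‖P.eval w⁻¹‖ := by
      rw [← hev, norm_mul, norm_pow, hxn]
    have hmle : m ≤ ‖(reflect n P).eval w‖ * k^n := by
      rw [hnorm]; exact hmin _ hxn
    rw [norm_inv]
    rw [inv_le_comm₀ (norm_pos_iff.2 (hne w (le_of_eq hwf))) (by positivity)]
    rw [inv_div, div_le_iff₀ (by positivity : (0:ℝ) < k^n)]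
    linarith
  have hdiff : DiffContOnCl ℂ (fun w => ((reflect n P).eval w)⁻¹) (ball (0:ℂ) (1/k)) := by
    apply DifferentiableOn.diffContOnCl
    rw [closure_ball (0:ℂ) (ne_of_gt h1k0)]
    apply DifferentiableOn.inv
    · exact (Polynomial.differentiable _).differentiableOn
    · intro w hw
      rw [mem_closedBall, dist_zero_right] at hw
      exact hne w hw
  intro w hw
  have hmem : w ∈ closure (ball (0:ℂ) (1/k)) := by
    rw [closure_ball (0:ℂ) (ne_of_gt h1k0), mem_closedBall, dist_zero_right]
    exact hw
  have := Complex.norm_le_of_forall_mem_frontier_norm_le isBounded_ball hdiff hfr hmem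
  rw [norm_inv] at this
  rw [inv_le_comm₀ (norm_pos_iff.2 (hne w hw)) (by positivity)] at this
  rwa [inv_div] at this

lemma natDegree_R_le' (P : Polynomial ℂ) (n : ℕ) (hn : 1 ≤ n) (hdeg : P.natDegree = n) :
    (C (n:ℂ) * P - X * derivative P).natDegree ≤ n := by
  apply le_trans (natDegree_sub_le _ _)
  apply max_le
  · exact le_trans (natDegree_C_mul_le _ _) (le_of_eq hdeg)
  · apply le_trans (natDegree_mul_le)
    have := natDegree_derivative_le P
    rw [hdeg] at this
    calc X.natDegree + (derivative P).natDegree ≤ 1 + (n - 1) := by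
          exact add_le_add (le_of_eq natDegree_X) this
      _ = n := by omega

lemma Qnorm (P : Polynomial ℂ) (n : ℕ) (hn : 1 ≤ n) (hdeg : P.natDegree = n)
    (Q : Polynomial ℂ)
    (hQ : ∀ z : ℂ, z ≠ 0 → Q.eval z = z ^ n * (starRingEnd ℂ) (P.eval (1 / (starRingEnd ℂ) z)))
    (z : ℂ) (hz1 : ‖z‖ = 1) :
    ‖Q.derivative.eval z‖ = ‖(C (n:ℂ) * P - X * derivative P).eval z‖ := by
  have hz0 : z ≠ 0 := fun h => by simp [h] at hz1
  set Q₀ : Polynomial ℂ := ∑ i ∈ Finset.range (n+1),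
      C ((starRingEnd ℂ) (P.coeff (n - i))) * X ^ i with hQ₀
  -- Q = Q₀
  have hagree : ∀ x : ℂ, x ≠ 0 → Q.eval x = Q₀.eval x := by
    intro x hx0
    rw [hQ x hx0]
    have hPx : P.eval (1 / (starRingEnd ℂ) x)
        = ∑ j ∈ Finset.range (n+1), P.coeff j * (1 / (starRingEnd ℂ) x) ^ j :=
      eval_eq_sum_range' (by omega : P.natDegree < n + 1) _
    rw [hPx, map_sum, Finset.mul_sum]
    have hterm : ∀ j ∈ Finset.range (n+1),
        x ^ n * (starRingEnd ℂ) (P.coeff j * (1 / (starRingEnd ℂ) x) ^ j)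
          = (starRingEnd ℂ) (P.coeff j) * x ^ (n - j) := by
      intro j hj
      rw [Finset.mem_range] at hj
      rw [map_mul, map_pow, map_div₀, map_one, Complex.conj_conj,
        pow_sub₀ x hx0 (by omega : j ≤ n)]
      field_simp
      rw [mul_assoc, ← mul_pow, one_div, inv_mul_cancel₀ hx0, one_pow, mul_one]
    rw [Finset.sum_congr rfl hterm]
    have : Q₀.eval x = ∑ i ∈ Finset.range (n+1),
        (starRingEnd ℂ) (P.coeff (n - i)) * x ^ i := by
      rw [hQ₀, eval_finset_sum]
      apply Finset.sum_congr rfl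
      intro i _
      rw [eval_mul, eval_C, eval_pow, eval_X]
    rw [this]
    rw [← Finset.sum_range_reflect]
    apply Finset.sum_congr rfl
    intro j hj
    rw [Finset.mem_range] at hj
    congr 2 <;> omega
  have hQeq : Q = Q₀ := by
    apply Polynomial.eq_of_infinite_eval_eq
    apply Set.Infinite.mono (s := {(0:ℂ)}ᶜ)
    · intro x hx
      exact hagree x hx
    · exact Set.Finite.infinite_compl (Set.finite_singleton 0)
  -- derivative of Q₀
  have hQd : Q.derivative.eval z
      = ∑ i ∈ Finset.range (n+1),
          (starRingEnd ℂ) (P.coeff (n - i)) * i * z ^ (i - 1) := by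
    rw [hQeq, hQ₀, derivative_sum, eval_finset_sum]
    apply Finset.sum_congr rfl
    intro i _
    rw [derivative_C_mul_X_pow, eval_mul, eval_C, eval_pow, eval_X]
  -- R in sum form
  set R : Polynomial ℂ := C (n:ℂ) * P - X * derivative P with hR
  have hRd : R.natDegree ≤ n := by rw [hR]; exact natDegree_R_le' P n hn hdeg
  have hRsum : R.eval z = ∑ j ∈ Finset.range (n+1), ((n:ℂ) - j) * P.coeff j * z ^ j := by
    have h1 : R.eval z = ∑ j ∈ Finset.range (n+1), R.coeff j * z ^ j :=
      eval_eq_sum_range' (by omega) _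
    rw [h1]
    apply Finset.sum_congr rfl
    intro j _
    rw [hR, coeff_R]
  -- key identity
  have hzz : z * (starRingEnd ℂ) z = 1 := by
    rw [Complex.mul_conj]
    rw [Complex.normSq_eq_norm_sq, hz1]
    norm_num
  have hkey : R.eval z = z ^ (n-1) * (starRingEnd ℂ) (Q.derivative.eval z) := by
    rw [hQd, map_sum, Finset.mul_sum, hRsum]
    rw [← Finset.sum_range_reflect]
    apply Finset.sum_congr rfl
    intro i hi
    rw [Finset.mem_range] at hi
    rw [show n + 1 - 1 - i = n - i from by omega]
    rw [map_mul, map_mul, map_pow, Complex.conj_conj, map_natCast]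
    rcases Nat.eq_zero_or_pos i with rfl | hi1
    · simp
    · have e1 : ((n:ℂ) - ((n - i : ℕ):ℂ)) = (i:ℂ) := by
        push_cast [Nat.cast_sub (by omega : i ≤ n)]
        ring
      rw [e1]
      have e2 : z ^ (n-1) = z ^ (n-i) * z ^ (i-1) := by
        rw [← pow_add]
        congr 1
        omega
      have e3 : z ^ (i-1) * ((starRingEnd ℂ) z) ^ (i-1) = 1 := by
        rw [← mul_pow, hzz, one_pow]
      calc (i:ℂ) * P.coeff (n - i) * z ^ (n - i)
          = P.coeff (n-i) * (i:ℂ) * (z^(n-i) * 1) := by ring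
        _ = P.coeff (n-i) * (i:ℂ) * (z^(n-i) * (z ^ (i-1) * ((starRingEnd ℂ) z) ^ (i-1))) := by
            rw [e3]
        _ = z ^ (n-1) * (P.coeff (n - i) * (i:ℂ) * ((starRingEnd ℂ) z) ^ (i-1)) := by
            rw [e2]; ring
  rw [hkey, norm_mul, norm_pow, hz1, one_pow, one_mul, RCLike.norm_conj]

theorem stmt16 (P : Polynomial ℂ) (n : ℕ) (hn : 1 ≤ n) (hdeg : P.natDegree = n)
    (k : ℝ) (hk0 : 0 < k) (hk1 : k ≤ 1)
    (hroots : ∀ z : ℂ, P.eval z = 0 → ‖z‖ ≤ k)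
    (μ : ℕ) (hμ1 : 1 ≤ μ) (hμn : μ ≤ n)
    (hgap : ∀ j, 1 ≤ j → j < μ → P.coeff (n - j) = 0)
    (Q : Polynomial ℂ)
    (hQ : ∀ z : ℂ, z ≠ 0 → Q.eval z = z ^ n * (starRingEnd ℂ) (P.eval (1 / (starRingEnd ℂ) z)))
    (m : ℝ) (hm : m = (⨅ z : sphere (0:ℂ) k, ‖P.eval ↑z‖))
    : ∀ z : ℂ, ‖z‖ = 1 →
      ‖Q.derivative.eval z‖ + (n : ℝ) * m / k ^ (n - μ) ≤ k ^ μ * ‖P.derivative.eval z‖ := by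
  intro z hz1
  have hz0 : z ≠ 0 := fun h => by simp [h] at hz1
  have hP0 : P ≠ 0 := fun h => by simp [h] at hdeg; omega
  have hrootsM : ∀ t ∈ P.roots, ‖t‖ ≤ k := fun t ht =>
    hroots t (Polynomial.isRoot_of_mem_roots ht)
  set R : Polynomial ℂ := C (n:ℂ) * P - X * derivative P with hR
  have hQR : ‖Q.derivative.eval z‖ = ‖R.eval z‖ := Qnorm P n hn hdeg Q hQ z hz1
  have hm0 : 0 ≤ m := by
    rw [hm]
    apply Real.iInf_nonneg
    intro i
    exact norm_nonneg _
  have hmle : ∀ ζ : ℂ, ‖ζ‖ = k → m ≤ ‖P.eval ζ‖ := by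
    intro ζ hζ
    rw [hm]
    have hmemζ : ζ ∈ sphere (0:ℂ) k := by
      rw [mem_sphere_iff_norm, sub_zero]; exact hζ
    exact ciInf_le ⟨0, fun x ⟨i, hi⟩ => hi ▸ norm_nonneg _⟩ (⟨ζ, hmemζ⟩ : sphere (0:ℂ) k)
  rcases eq_or_lt_of_le hm0 with hmz | hmpos
  · -- m = 0
    rw [hQR, ← hmz]
    have h0 : (n:ℝ) * 0 / k ^ (n - μ) = 0 := by ring
    rw [h0, add_zero]
    exact lemC P n μ hn hdeg k hk0 hk1 hrootsM hμ1 hμn hgap z hz1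
  · -- m > 0
    have hstrict : ∀ t ∈ P.roots, ‖t‖ < k := by
      intro t ht
      rcases lt_or_eq_of_le (hrootsM t ht) with h | h
      · exact h
      · exfalso
        have h1 := hmle t h
        rw [(Polynomial.isRoot_of_mem_roots ht : P.eval t = 0)] at h1
        rw [norm_zero] at h1
        linarith
    have hgrow := growth P n hn hdeg k m hk0 hstrict hmle hmpos
    set M : ℝ := m / k^n with hM
    have hMpos : 0 < M := by rw [hM]; positivity
    have hlead : M ≤ ‖P.coeff n‖ := by
      have := hgrow 0 (by rw [norm_zero]; positivity)
      rwa [reflect_eval_zero] at this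
    have hPge : ∀ x : ℂ, k ≤ ‖x‖ → M * ‖x‖^n ≤ ‖P.eval x‖ := by
      intro x hx
      have hx0 : x ≠ 0 := by
        intro h; rw [h, norm_zero] at hx; linarith
      have hw : ‖x⁻¹‖ ≤ 1/k := by
        rw [norm_inv, one_div]
        exact inv_anti₀ hk0 hx
      have h1 := hgrow x⁻¹ hw
      have hev := reflect_eval (le_of_eq hdeg) hx0
      have h2 : ‖P.eval x‖ = ‖(reflect n P).eval x⁻¹‖ * ‖x‖^n := by
        rw [← hev, norm_mul, norm_pow]
      rw [h2]
      exact mul_le_mul_of_nonneg_right h1 (by positivity)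
    -- the perturbed polynomial machinery
    have hkeys : ∀ c : ℂ, ‖c‖ < M →
        ‖R.eval z‖ ≤ k^μ * ‖(derivative P).eval z - c * n * z^(n-1)‖ ∧
        (derivative P).eval z - c * n * z^(n-1) ≠ 0 := by
      intro c hc
      set Pc : Polynomial ℂ := P - C c * X^n with hPc
      have hPccoeff : Pc.coeff n = P.coeff n - c := by
        rw [hPc, coeff_sub, coeff_C_mul, coeff_X_pow]
        simp
      have hcn : Pc.coeff n ≠ 0 := by
        rw [hPccoeff, sub_ne_zero]
        intro h
        rw [← h] at hc
        exact absurd hlead (not_le.2 hc)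
      have hdegPc : Pc.natDegree = n := by
        apply le_antisymm
        · apply le_trans (natDegree_sub_le _ _)
          apply max_le (le_of_eq hdeg)
          exact le_trans (natDegree_C_mul_le _ _) (le_of_eq (natDegree_X_pow n))
        · exact le_natDegree_of_ne_zero hcn
      have hPc0 : Pc ≠ 0 := fun h => hcn (by rw [h, coeff_zero])
      have hrootsPc : ∀ t ∈ Pc.roots, ‖t‖ < k := by
        intro t ht
        by_contra hge
        push_neg at hge
        have heval : Pc.eval t = 0 := Polynomial.isRoot_of_mem_roots ht
        rw [hPc, eval_sub, eval_mul, eval_C, eval_pow, eval_X, sub_eq_zero] at heval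
        have h1 : ‖P.eval t‖ = ‖c‖ * ‖t‖^n := by
          rw [heval, norm_mul, norm_pow]
        have h2 := hPge t hge
        have h3 : (0:ℝ) < ‖t‖^n := by
          have : (0:ℝ) < ‖t‖ := lt_of_lt_of_le hk0 hge
          positivity
        nlinarith
      have hgapPc : ∀ j, 1 ≤ j → j < μ → Pc.coeff (n - j) = 0 := by
        intro j hj1 hjμ
        rw [hPc, coeff_sub, coeff_C_mul, coeff_X_pow, hgap j hj1 hjμ]
        rw [if_neg (by omega : ¬ (n - j = n))]
        simp
      have hxp : ∀ a : ℂ, X * (C a * X^(n-1)) = C a * X^n := by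
        intro a
        rw [show X * (C a * X^(n-1)) = C a * (X^(n-1) * X) from by ring, ← pow_succ,
          show (n-1)+1 = n from by omega]
      have hRc : C (n:ℂ) * Pc - X * derivative Pc = R := by
        rw [hPc, derivative_sub, derivative_C_mul_X_pow, mul_sub, mul_sub, hxp (c * n), hR,
          map_mul]
        ring
      have hPcd : (derivative Pc).eval z = (derivative P).eval z - c * n * z^(n-1) := by
        rw [hPc, derivative_sub, derivative_C_mul_X_pow, eval_sub, eval_mul, eval_C, eval_pow,
          eval_X]
      constructor
      · have := lemC Pc n μ hn hdegPc k hk0 hk1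
          (fun t ht => le_of_lt (hrootsPc t ht)) hμ1 hμn hgapPc z hz1
        rw [hRc, hPcd] at this
        exact this
      · have := (deriv_ne_zero Pc (hdegPc ▸ hn) z
          (fun t ht => lt_of_lt_of_le (hrootsPc t ht) (le_trans hk1 (le_of_eq hz1.symm)))).2
        rwa [hPcd] at this
    -- scalar extraction
    set D : ℝ := ‖(derivative P).eval z‖ with hD
    have hDpos : 0 < D := by
      have h0 := (hkeys 0 (by rw [norm_zero]; exact hMpos)).2
      simp only [zero_mul] at h0
      rw [sub_zero] at h0
      rw [hD]
      exact norm_pos_iff.2 h0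
    have hDne : ((D:ℝ):ℂ) ≠ 0 := by
      simp only [ne_eq, Complex.ofReal_eq_zero]
      linarith
    have hnM : (n:ℝ) * M ≤ D := by
      by_contra h
      push_neg at h
      set c₀ : ℂ := (derivative P).eval z / ((n:ℂ) * z^(n-1)) with hc₀
      have hnz : ((n:ℂ) * z^(n-1)) ≠ 0 := by
        apply mul_ne_zero
        · exact_mod_cast Nat.cast_ne_zero.2 (by omega)
        · exact pow_ne_zero _ hz0
      have hc₀n : ‖c₀‖ < M := by
        rw [hc₀, norm_div, norm_mul, norm_pow, hz1, one_pow, mul_one]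
        rw [div_lt_iff₀ (by exact_mod_cast Nat.cast_pos.2 (by omega) : (0:ℝ) < ‖(n:ℂ)‖)]
        · rw [Complex.norm_natCast]
          linarith [h]
      have := (hkeys c₀ hc₀n).2
      apply this
      rw [hc₀]
      field_simp
      rw [div_self (left_ne_zero_of_mul hnz), sub_self, mul_zero]
    have hfin : ∀ t : ℝ, 0 ≤ t → t < M → ‖R.eval z‖ + k^μ * (n * t) ≤ k^μ * D := by
      intro t ht0 htM
      set c : ℂ := (t:ℂ) * (derivative P).eval z / (((D:ℝ):ℂ) * z^(n-1)) with hc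
      have hcnorm : ‖c‖ = t := by
        rw [hc, norm_div, norm_mul, norm_mul, norm_pow, hz1, one_pow, mul_one,
          Complex.norm_real, Complex.norm_real, Real.norm_eq_abs, Real.norm_eq_abs,
          _root_.abs_of_pos hDpos, _root_.abs_of_nonneg ht0, ← hD]
        rw [mul_div_assoc, div_self (ne_of_gt hDpos), mul_one]
      have hceval : (derivative P).eval z - c * n * z^(n-1)
          = (derivative P).eval z * (1 - ((t * n / D : ℝ):ℂ)) := by
        rw [hc]
        have hzn : (z:ℂ)^(n-1) ≠ 0 := pow_ne_zero _ hz0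
        field_simp
        push_cast; linear_combination ((derivative P).eval z * (t:ℂ) * (n:ℂ)) * mul_inv_cancel₀ hDne
      have hnorm2 : ‖(derivative P).eval z - c * n * z^(n-1)‖ = D - t * n := by
        rw [hceval, norm_mul, ← hD]
        have h1 : ‖(1 - ((t * n / D : ℝ):ℂ))‖ = |1 - t * n / D| := by
          rw [show (1 - ((t * n / D : ℝ):ℂ)) = (((1 - t * n / D : ℝ)):ℂ) by push_cast; ring]
          rw [Complex.norm_real, Real.norm_eq_abs]
        rw [h1]
        have htn : t * n ≤ D := by
          have h2 : t * n < M * n := by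
            apply mul_lt_mul_of_pos_right htM
            exact_mod_cast Nat.cast_pos.2 (by omega)
          nlinarith
        rw [_root_.abs_of_nonneg (by rw [sub_nonneg, div_le_one hDpos]; exact htn)]
        rw [mul_sub, mul_one, mul_div_cancel₀ _ (ne_of_gt hDpos)]
      have hkey1 := (hkeys c (by rw [hcnorm]; exact htM)).1
      rw [hnorm2] at hkey1
      have : k^μ * (D - t * n) = k^μ * D - k^μ * (n * t) := by ring
      rw [this] at hkey1
      linarith
    have hlim : ‖R.eval z‖ + k^μ * (n * M) ≤ k^μ * D := by
      have htend : Filter.Tendsto (fun t : ℝ => ‖R.eval z‖ + k^μ * (n * t))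
          (nhdsWithin M (Set.Iio M)) (nhds (‖R.eval z‖ + k^μ * (n * M))) := by
        apply Filter.Tendsto.mono_left _ nhdsWithin_le_nhds
        exact (Continuous.tendsto (by
          exact continuous_const.add (continuous_const.mul
            (continuous_const.mul continuous_id))) M)
      apply le_of_tendsto htend
      filter_upwards [Ioo_mem_nhdsLT_of_mem (Set.mem_Ioc.2 ⟨hMpos, le_refl _⟩)] with t htm
      exact hfin t (le_of_lt htm.1) htm.2
    -- final arithmetic
    rw [hQR]
    have harith : (n:ℝ) * m / k ^ (n - μ) = k^μ * (n * M) := by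
      rw [hM]
      have hkn : (k:ℝ)^n = k^(n-μ) * k^μ := by
        rw [← pow_add]
        congr 1
        omega
      rw [hkn]
      field_simp
    rw [harith]
    calc ‖R.eval z‖ + k^μ * (n * M) ≤ k^μ * D := hlim
      _ = k^μ * ‖P.derivative.eval z‖ := by rw [hD]
end
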